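/- For a single Kraus operator F on B with N = F†F, a pure state |ψ^{AB}⟩ = Σ_i √ω_i |i⟩|β_i⟩, and the corresponding maximally entangled state |φ^{AB}⟩ = (1/√d) Σ_i |i⟩|β_i⟩, the unnormalized coherences satisfy p'·C_{l1}(ρ^A') ≤ (d/2)·E(|ψ⟩)·p''·C_{l1}(ρ^A''), where ρ^A', p' (resp. ρ^A'', p'') are the normalized post-operation A-state and outcome probability for |ψ⟩ (resp. |φ⟩). -/

import Mathlib

open Matrix Kronecker BigOperators Finset ComplexOrder

noncomputable def l1Coh {d : ℕ} (ρ : Matrix (Fin d) (Fin d) ℂ) : ℝ :=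
  ∑ i, ∑ j, if i ≠ j then ‖ρ i j‖ else 0

noncomputable def ptraceB {dA dB : ℕ}
    (ρ : Matrix (Fin dA × Fin dB) (Fin dA × Fin dB) ℂ) : Matrix (Fin dA) (Fin dA) ℂ :=
  fun i k => ∑ j, ρ (i, j) (k, j)

noncomputable def postA {dA dB : ℕ} (F : Matrix (Fin dB) (Fin dB) ℂ)
    (χ : Fin dA × Fin dB → ℂ) : Matrix (Fin dA) (Fin dA) ℂ :=
  ptraceB (((1 : Matrix (Fin dA) (Fin dA) ℂ) ⊗ₖ F) * Matrix.vecMulVec χ (star χ) *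
    ((1 : Matrix (Fin dA) (Fin dA) ℂ) ⊗ₖ F)ᴴ)

lemma postA_apply {dA dB : ℕ} (F : Matrix (Fin dB) (Fin dB) ℂ) (χ : Fin dA × Fin dB → ℂ)
    (i k : Fin dA) :
    postA F χ i k = ∑ j, (∑ a, F j a * χ (i, a)) * (starRingEnd ℂ) (∑ b, F j b * χ (k, b)) := by
  unfold postA ptraceB
  simp only [Matrix.mul_apply, Matrix.vecMulVec_apply, Matrix.conjTranspose_apply,
    Matrix.kroneckerMap_apply, Matrix.one_apply, Fintype.sum_prod_type, Pi.star_apply,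
    Complex.star_def, apply_ite (starRingEnd ℂ), map_zero, ite_mul, mul_ite, zero_mul, mul_zero,
    Finset.sum_ite_eq, Finset.sum_ite_eq', Finset.mem_univ, if_true,
    map_sum, _root_.map_mul, Finset.mul_sum, Finset.sum_mul]
  refine Finset.sum_congr rfl fun j _ => ?_
  rw [Finset.sum_comm]
  simp only [Finset.sum_ite_eq, Finset.mem_univ, if_true, one_mul, _root_.map_one]
  refine Finset.sum_congr rfl fun b _ => ?_
  conv_lhs => rw [Finset.sum_comm]
  simp only [Finset.sum_ite_eq, Finset.mem_univ, if_true, one_mul, _root_.map_one]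
  refine Finset.sum_congr rfl fun a _ => ?_
  ring

lemma l1Coh_mul_inv_smul {n : ℕ} (ρ : Matrix (Fin n) (Fin n) ℂ) {r : ℝ} (hr : 0 < r) :
    r * l1Coh ((r : ℂ)⁻¹ • ρ) = l1Coh ρ := by
  unfold l1Coh
  rw [Finset.mul_sum]
  refine Finset.sum_congr rfl fun i _ => ?_
  rw [Finset.mul_sum]
  refine Finset.sum_congr rfl fun j _ => ?_
  rw [mul_ite, mul_zero]
  split
  · rw [Matrix.smul_apply, smul_eq_mul, norm_mul, norm_inv, Complex.norm_of_nonneg hr.le]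
    field_simp
  · rfl

/-- Single-Kraus-operator step of Theorem 3:
`p'·C(ρ^A') ≤ (d/2)·E(ψ)·p''·C(ρ^A'')`, with `E(ψ) = √(2 Σ_{i≠j} ω_i ω_j)`. -/
theorem single_kraus_RCC_bound
    {d dB : ℕ}
    (ω : Fin d → ℝ) (hω : ∀ i, 0 ≤ ω i) (hωsum : ∑ i, ω i = 1)
    (β : Fin d → Fin dB → ℂ)
    (hβ : ∀ i k, ∑ j, (starRingEnd ℂ) (β i j) * β k j = if i = k then 1 else 0)
    (ψ φ : Fin d × Fin dB → ℂ)
    (hψ : ∀ i j, ψ (i, j) = (Real.sqrt (ω i) : ℂ) * β i j)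
    (hφ : ∀ i j, φ (i, j) = ((Real.sqrt d : ℝ) : ℂ)⁻¹ * β i j)
    (F : Matrix (Fin dB) (Fin dB) ℂ)
    (p' p'' : ℝ)
    (hp' : p' = ((postA F ψ).trace).re) (hp'' : p'' = ((postA F φ).trace).re)
    (hp'pos : 0 < p') (hp''pos : 0 < p'')
    (E : ℝ) (hE : E = Real.sqrt (2 * ∑ i, ∑ j, if i ≠ j then ω i * ω j else 0)) :
    p' * l1Coh ((p' : ℂ)⁻¹ • postA F ψ)
      ≤ ((d : ℝ) / 2) * E * (p'' * l1Coh ((p'' : ℂ)⁻¹ • postA F φ)) := by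
  have hd : 0 < d := by
    rcases Nat.eq_zero_or_pos d with h | h
    · subst h; simp at hωsum
    · exact h
  have hdR : (0 : ℝ) < (d : ℝ) := by exact_mod_cast hd
  set M : Fin d → Fin d → ℂ :=
    fun i k => ∑ j, (∑ a, F j a * β i a) * (starRingEnd ℂ) (∑ b, F j b * β k b) with hM
  have hψE : ∀ i k, postA F ψ i k =
      ((Real.sqrt (ω i) : ℂ) * (Real.sqrt (ω k) : ℂ)) * M i k := by
    intro i k
    rw [postA_apply, hM, Finset.mul_sum]
    refine Finset.sum_congr rfl fun j _ => ?_
    have h1 : (∑ a, F j a * ψ (i, a)) = (Real.sqrt (ω i) : ℂ) * ∑ a, F j a * β i a := by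
      rw [Finset.mul_sum]; exact Finset.sum_congr rfl fun a _ => by rw [hψ]; ring
    have h2 : (∑ b, F j b * ψ (k, b)) = (Real.sqrt (ω k) : ℂ) * ∑ b, F j b * β k b := by
      rw [Finset.mul_sum]; exact Finset.sum_congr rfl fun b _ => by rw [hψ]; ring
    rw [h1, h2, _root_.map_mul, Complex.conj_ofReal]
    ring
  have hφE : ∀ i k, postA F φ i k = (((d : ℝ) : ℂ))⁻¹ * M i k := by
    intro i k
    rw [postA_apply, hM, Finset.mul_sum]
    refine Finset.sum_congr rfl fun j _ => ?_
    have h1 : (∑ a, F j a * φ (i, a)) = ((Real.sqrt d : ℝ) : ℂ)⁻¹ * ∑ a, F j a * β i a := by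
      rw [Finset.mul_sum]; exact Finset.sum_congr rfl fun a _ => by rw [hφ]; ring
    have h2 : (∑ b, F j b * φ (k, b)) = ((Real.sqrt d : ℝ) : ℂ)⁻¹ * ∑ b, F j b * β k b := by
      rw [Finset.mul_sum]; exact Finset.sum_congr rfl fun b _ => by rw [hφ]; ring
    have hs : ((Real.sqrt d : ℝ) : ℂ)⁻¹ * ((Real.sqrt d : ℝ) : ℂ)⁻¹ = (((d : ℝ) : ℂ))⁻¹ := by
      rw [← mul_inv, ← Complex.ofReal_mul, Real.mul_self_sqrt (Nat.cast_nonneg d)]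
    rw [h1, h2, _root_.map_mul, map_inv₀, Complex.conj_ofReal]
    rw [show ((Real.sqrt d : ℝ) : ℂ)⁻¹ * (∑ a, F j a * β i a) *
        (((Real.sqrt d : ℝ) : ℂ)⁻¹ * (starRingEnd ℂ) (∑ b, F j b * β k b)) =
        (((Real.sqrt d : ℝ) : ℂ)⁻¹ * ((Real.sqrt d : ℝ) : ℂ)⁻¹) *
          ((∑ a, F j a * β i a) * (starRingEnd ℂ) (∑ b, F j b * β k b)) from by ring, hs]
  rw [l1Coh_mul_inv_smul _ hp'pos, l1Coh_mul_inv_smul _ hp''pos]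
  -- key scalar bound
  set S : ℝ := ∑ i, ∑ j, if i ≠ j then ω i * ω j else 0 with hS
  have key : ∀ i k : Fin d, i ≠ k → Real.sqrt (ω i) * Real.sqrt (ω k) ≤ E / 2 := by
    intro i k hik
    have hpair : ω i * ω k + ω k * ω i ≤ S := by
      have hrw : S = ∑ p : Fin d × Fin d, (if p.1 ≠ p.2 then ω p.1 * ω p.2 else 0) := by
        rw [hS, ← Finset.sum_product']; rfl
      have hsub : ({(i, k), (k, i)} : Finset (Fin d × Fin d)) ⊆ Finset.univ :=
        Finset.subset_univ _
      have hne : ((i, k) : Fin d × Fin d) ≠ (k, i) := by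
        simp [Prod.ext_iff]; intro h; exact absurd h hik
      have := Finset.sum_le_sum_of_subset_of_nonneg hsub
        (f := fun p : Fin d × Fin d => if p.1 ≠ p.2 then ω p.1 * ω p.2 else 0)
        (fun p _ _ => by
          by_cases hp : p.1 ≠ p.2 <;> simp [hp] <;> exact mul_nonneg (hω _) (hω _))
      rw [Finset.sum_pair hne] at this
      simpa [hik, hik.symm, hrw] using this
    have h2S : 4 * (ω i * ω k) ≤ 2 * S := by nlinarith
    have hsq : Real.sqrt (ω i) * Real.sqrt (ω k) = Real.sqrt (ω i * ω k) :=
      (Real.sqrt_mul (hω i) _).symm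
    have h1 : Real.sqrt (4 * (ω i * ω k)) ≤ Real.sqrt (2 * S) := Real.sqrt_le_sqrt h2S
    have h2 : Real.sqrt (4 * (ω i * ω k)) = 2 * Real.sqrt (ω i * ω k) := by
      rw [show (4 : ℝ) * (ω i * ω k) = 2 ^ 2 * (ω i * ω k) from by ring,
        Real.sqrt_mul (by positivity), Real.sqrt_sq (by norm_num)]
    rw [hsq, hE]
    linarith
  -- entrywise absolute values
  have habsψ : ∀ i k, ‖postA F ψ i k‖ =
      Real.sqrt (ω i) * Real.sqrt (ω k) * ‖M i k‖ := by
    intro i k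
    rw [hψE, norm_mul, norm_mul, Complex.norm_of_nonneg (Real.sqrt_nonneg _),
      Complex.norm_of_nonneg (Real.sqrt_nonneg _)]
  have habsφ : ∀ i k, ‖postA F φ i k‖ = (d : ℝ)⁻¹ * ‖M i k‖ := by
    intro i k
    rw [hφE, norm_mul, norm_inv, Complex.norm_of_nonneg hdR.le]
  unfold l1Coh
  rw [Finset.mul_sum]
  refine Finset.sum_le_sum fun i _ => ?_
  rw [Finset.mul_sum]
  refine Finset.sum_le_sum fun k _ => ?_
  rw [mul_ite, mul_zero]
  split_ifs with h
  · rw [habsψ, habsφ]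
    have hcoef : (d : ℝ) / 2 * E * ((d : ℝ)⁻¹ * ‖M i k‖)
        = E / 2 * ‖M i k‖ := by
      field_simp
    rw [hcoef]
    exact mul_le_mul_of_nonneg_right (key i k h) (norm_nonneg _)
  · exact le_rfl
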